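/- There is no injective group homomorphism from the symmetric group S₅ = Perm(Fin 5) into the orthogonal group O(3,ℝ); equivalently, S₅ does not act faithfully and orthogonally on the 2-sphere. -/
import Mathlib

private def tau5 : Equiv.Perm (Fin 5) := ⟨fun i => 2*i, fun i => 3*i, by decide, by decide⟩

private lemma tr_sq_aux (M : Matrix (Fin 3) (Fin 3) ℝ) :
    (M*M).trace = M.trace^2 - 2*(M.adjugate).trace := by
  simp [Matrix.trace_fin_three, Matrix.mul_apply, Fin.sum_univ_three,
    Matrix.adjugate_fin_three, Matrix.det_fin_three]
  ring

private lemma tr_cube_aux (M : Matrix (Fin 3) (Fin 3) ℝ) :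
    (M*M*M).trace = M.trace*(M*M).trace - (M.adjugate).trace*M.trace + 3*M.det := by
  simp [Matrix.trace_fin_three, Matrix.mul_apply, Fin.sum_univ_three,
    Matrix.adjugate_fin_three, Matrix.det_fin_three]
  ring

set_option maxHeartbeats 1000000 in
open Matrix in
private lemma key_matrix (M N N3 : Matrix (Fin 3) (Fin 3) ℝ)
    (hMo : M * star M = 1) (hMo' : star M * M = 1)
    (hNo : N * star N = 1) (hNo' : star N * N = 1)
    (hN3o : N3 * star N3 = 1) (hN3o' : star N3 * N3 = 1)
    (hM5 : M ^ 5 = 1)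
    (hc1 : N * M = M * M * N) (hc3 : N3 * M = M * M * M * N3) : M = 1 := by
  have hstar : star M = Mᵀ := by
    ext i j
    simp [Matrix.star_apply]
  -- det M = 1
  have hd2 : M.det ^ 2 = 1 := by
    have := congrArg Matrix.det hMo
    rwa [Matrix.det_mul, hstar, Matrix.det_transpose, ← sq, Matrix.det_one] at this
  have hd5 : M.det ^ 5 = 1 := by
    rw [← Matrix.det_pow, hM5, Matrix.det_one]
  have hd : M.det = 1 := by linear_combination hd5 - (M.det^3 + M.det) * hd2
  -- adjugate M = Mᵀ
  have hadj : M.adjugate = Mᵀ := by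
    have h1 : M * M.adjugate = 1 := by rw [Matrix.mul_adjugate, hd, one_smul]
    calc M.adjugate = (Mᵀ * M) * M.adjugate := by rw [← hstar, hMo', one_mul]
    _ = Mᵀ * (M * M.adjugate) := by rw [mul_assoc]
    _ = Mᵀ := by rw [h1, mul_one]
  have hatr : M.adjugate.trace = M.trace := by rw [hadj, Matrix.trace_transpose]
  -- trace of conjugates
  have htr2 : (M * M).trace = M.trace := by
    have e : (M * M * N) * star N = M * M := by rw [mul_assoc, hNo, mul_one]
    calc (M*M).trace = ((M*M*N) * star N).trace := by rw [e]
    _ = ((N*M) * star N).trace := by rw [← hc1]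
    _ = (star N * (N*M)).trace := Matrix.trace_mul_comm _ _
    _ = M.trace := by rw [← mul_assoc, hNo', one_mul]
  have htr3 : (M * M * M).trace = M.trace := by
    have e : (M * M * M * N3) * star N3 = M * M * M := by rw [mul_assoc, hN3o, mul_one]
    calc (M*M*M).trace = ((M*M*M*N3) * star N3).trace := by rw [e]
    _ = ((N3*M) * star N3).trace := by rw [← hc3]
    _ = (star N3 * (N3*M)).trace := Matrix.trace_mul_comm _ _
    _ = M.trace := by rw [← mul_assoc, hN3o', one_mul]
  -- trace M = 3
  have ht3 : M.trace = 3 := by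
    have e3 := tr_cube_aux M
    rw [htr3, htr2, hatr, hd] at e3
    linarith
  -- rows are unit vectors
  have hMt : M * Mᵀ = 1 := by rw [← hstar]; exact hMo
  have row : ∀ i : Fin 3, M i 0 * M i 0 + M i 1 * M i 1 + M i 2 * M i 2 = 1 := by
    intro i
    have := congrFun (congrFun hMt i) i
    simpa [Matrix.mul_apply, Fin.sum_univ_three, Matrix.one_apply] using this
  have h0 := row 0; have h1 := row 1; have h2 := row 2
  have htr : M 0 0 + M 1 1 + M 2 2 = 3 := by
    rw [Matrix.trace_fin_three] at ht3; exact ht3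
  have b0 : M 0 0 ≤ 1 := by nlinarith [sq_nonneg (M 0 0 - 1), sq_nonneg (M 0 1), sq_nonneg (M 0 2)]
  have b1 : M 1 1 ≤ 1 := by nlinarith [sq_nonneg (M 1 1 - 1), sq_nonneg (M 1 0), sq_nonneg (M 1 2)]
  have b2 : M 2 2 ≤ 1 := by nlinarith [sq_nonneg (M 2 2 - 1), sq_nonneg (M 2 0), sq_nonneg (M 2 1)]
  have d0 : M 0 0 = 1 := by linarith
  have d1 : M 1 1 = 1 := by linarith
  have d2 : M 2 2 = 1 := by linarith
  have o01 : M 0 1 = 0 := by nlinarith [sq_nonneg (M 0 1), sq_nonneg (M 0 2)]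
  have o02 : M 0 2 = 0 := by nlinarith [sq_nonneg (M 0 1), sq_nonneg (M 0 2)]
  have o10 : M 1 0 = 0 := by nlinarith [sq_nonneg (M 1 0), sq_nonneg (M 1 2)]
  have o12 : M 1 2 = 0 := by nlinarith [sq_nonneg (M 1 0), sq_nonneg (M 1 2)]
  have o20 : M 2 0 = 0 := by nlinarith [sq_nonneg (M 2 0), sq_nonneg (M 2 1)]
  have o21 : M 2 1 = 0 := by nlinarith [sq_nonneg (M 2 0), sq_nonneg (M 2 1)]
  ext i j
  fin_cases i <;> fin_cases j <;>
    simp [Matrix.one_apply, d0, d1, d2, o01, o02, o10, o12, o20, o21]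

/-- There is no injective group homomorphism from the symmetric group `S₅ = Perm (Fin 5)`
into the orthogonal group `O(3,ℝ)`. -/
theorem statement10 :
    ¬ ∃ f : Equiv.Perm (Fin 5) →* ↥(Matrix.orthogonalGroup (Fin 3) ℝ),
      Function.Injective f := by
  rintro ⟨f, hf⟩
  have hσ : (finRotate 5 : Equiv.Perm (Fin 5)) ≠ 1 := by decide
  apply hσ
  apply hf
  rw [_root_.map_one]
  apply Subtype.ext
  show ((f (finRotate 5) : Matrix (Fin 3) (Fin 3) ℝ)) = 1
  apply key_matrix _ (↑(f tau5)) (↑(f (tau5^3)))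
  · exact (Matrix.mem_orthogonalGroup_iff (Fin 3) ℝ).mp (f (finRotate 5)).2
  · exact (Matrix.mem_orthogonalGroup_iff' (Fin 3) ℝ).mp (f (finRotate 5)).2
  · exact (Matrix.mem_orthogonalGroup_iff (Fin 3) ℝ).mp (f tau5).2
  · exact (Matrix.mem_orthogonalGroup_iff' (Fin 3) ℝ).mp (f tau5).2
  · exact (Matrix.mem_orthogonalGroup_iff (Fin 3) ℝ).mp (f (tau5^3)).2
  · exact (Matrix.mem_orthogonalGroup_iff' (Fin 3) ℝ).mp (f (tau5^3)).2
  · have h : f (finRotate 5) ^ 5 = 1 := by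
      rw [← _root_.map_pow, show (finRotate 5 : Equiv.Perm (Fin 5))^5 = 1 by decide,
        _root_.map_one]
    have h2 := congrArg Subtype.val h
    push_cast at h2
    exact h2
  · have key : f tau5 * f (finRotate 5) = f (finRotate 5) * f (finRotate 5) * f tau5 := by
      simp only [← _root_.map_mul]
      congr 1
      decide
    have h2 := congrArg Subtype.val key
    push_cast at h2
    exact h2
  · have key : f (tau5^3) * f (finRotate 5) =
        f (finRotate 5) * f (finRotate 5) * f (finRotate 5) * f (tau5^3) := by
      simp only [← _root_.map_mul]
      congr 1
      decide
    have h2 := congrArg Subtype.val key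
    push_cast at h2
    exact h2
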